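/- arXiv:2103.04985 — 4 statements merged into one kernel-verified Lean document; each statement's English description precedes it below -/
import Mathlib

section
/- Consider classification with Y ∈ {1,...,K} and the cross-entropy loss l(f(X), Y) = -1_Y^T log(f(X)), where f(X) is a probability vector. Let f*_k(x) = P(Y=k | X=x) and g*_k(z) = P(Y=k | Z=z) be the population minimizers. Then R(f*) - R_S(g*) = 0 if and only if for every k, P(Y=k | X_S, X_{S^c}) = P(Y=k | X_{S^c}) almost surely; that is, risk invariance under the cross-entropy loss is equivalent to conditional independence of Y and X_S given X_{S^c} almost surely. -/
open MeasureTheory ProbabilityTheory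

private lemma gibbs_le {a b : ℝ} (ha : 0 ≤ a) (hb : 0 ≤ b) (h0 : b = 0 → a = 0) :
    a * (Real.log b - Real.log a) ≤ b - a := by
  rcases ha.eq_or_lt with h | h
  · simp [← h, hb]
  · have hb' : 0 < b := by
      rcases hb.eq_or_lt with h' | h'
      · exact absurd (h0 h'.symm) (ne_of_gt h)
      · exact h'
    have hlog : Real.log b - Real.log a = Real.log (b / a) := (Real.log_div hb'.ne' h.ne').symm
    rw [hlog]
    calc a * Real.log (b / a) ≤ a * (b / a - 1) :=
          mul_le_mul_of_nonneg_left (Real.log_le_sub_one_of_pos (div_pos hb' h)) ha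
      _ = b - a := by field_simp

private lemma gibbs_eq {a b : ℝ} (ha : 0 ≤ a) (hb : 0 ≤ b) (h0 : b = 0 → a = 0)
    (h : a * (Real.log b - Real.log a) = b - a) : a = b := by
  rcases ha.eq_or_lt with h' | h'
  · rw [← h'] at h ⊢
    simp only [zero_mul] at h
    linarith
  · have hb' : 0 < b := by
      rcases hb.eq_or_lt with h'' | h''
      · exact absurd (h0 h''.symm) (ne_of_gt h')
      · exact h''
    by_contra hne
    have hba : b / a ≠ 1 := fun hh => hne ((div_eq_one_iff_eq h'.ne').1 hh).symm
    have hlt := Real.log_lt_sub_one_of_pos (div_pos hb' h') hba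
    have h2 : a * Real.log (b / a) < a * (b / a - 1) := mul_lt_mul_of_pos_left hlt h'
    rw [Real.log_div hb'.ne' h'.ne'] at h2
    have h3 : a * (b / a - 1) = b - a := by field_simp
    linarith [h, h2, h3]

private lemma pull_step {Ω : Type*} [inst : MeasurableSpace Ω] {μ : Measure Ω}
    [IsProbabilityMeasure μ]
    {m : MeasurableSpace Ω} (hm : m ≤ inst) {I h r : Ω → ℝ}
    (hh : StronglyMeasurable[m] h) (hI : Integrable I μ)
    (hprod : Integrable (fun ω => h ω * I ω) μ)
    (hr : r =ᵐ[μ] μ[I | m]) :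
    Integrable (fun ω => h ω * r ω) μ ∧
      ∫ ω, h ω * I ω ∂μ = ∫ ω, h ω * r ω ∂μ := by
  have hpull : μ[(fun ω => h ω * I ω) | m] =ᵐ[μ] fun ω => h ω * (μ[I|m]) ω :=
    condExp_mul_of_stronglyMeasurable_left hh hprod hI
  have hae : (fun ω => h ω * (μ[I|m]) ω) =ᵐ[μ] fun ω => h ω * r ω := by
    filter_upwards [hr] with ω hω
    rw [hω]
  constructor
  · exact (integrable_condExp.congr hpull).congr hae
  · calc ∫ ω, h ω * I ω ∂μ
        = ∫ ω, (μ[(fun ω => h ω * I ω)|m]) ω ∂μ := (integral_condExp hm).symm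
      _ = ∫ ω, h ω * r ω ∂μ := integral_congr_ae (hpull.trans hae)

/-- Under the cross-entropy loss, risk invariance `R(f*) = R_S(g*)` is equivalent to
conditional independence of `Y` and `X_S` given `X_{S^c}` almost surely, i.e. to
`P(Y = k | X) = P(Y = k | Z)` a.s. for every class `k`, where `Z` is the masked
feature vector.  Here `fstar` and `gstar` are the population minimizers, i.e. versions
of the conditional class probabilities given `X` and given `Z` respectively. -/
theorem crossEntropy_risk_invariance_iff_cond_indep
    {Ω : Type*} [MeasurableSpace Ω]
    {d K : ℕ} (μ : Measure Ω) [IsProbabilityMeasure μ]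
    (X : Ω → Fin d → ℝ) (Y : Ω → Fin K) (S : Finset (Fin d))
    (Z : Ω → Fin d → ℝ)
    (hZ : ∀ ω i, Z ω i = if i ∈ S then 0 else X ω i)
    (hX : Measurable X) (hY : Measurable Y)
    (fstar gstar : (Fin d → ℝ) → Fin K → ℝ)
    (hfmeas : Measurable fstar) (hgmeas : Measurable gstar)
    -- `fstar k (X ω)` is a version of `P(Y = k | X)`
    (hfstar : ∀ k : Fin K, (fun ω => fstar (X ω) k)
      =ᵐ[μ] μ[(fun ω => if Y ω = k then (1 : ℝ) else 0) |
        MeasurableSpace.comap X MeasurableSpace.pi])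
    -- `gstar k (Z ω)` is a version of `P(Y = k | Z)`
    (hgstar : ∀ k : Fin K, (fun ω => gstar (Z ω) k)
      =ᵐ[μ] μ[(fun ω => if Y ω = k then (1 : ℝ) else 0) |
        MeasurableSpace.comap Z MeasurableSpace.pi])
    -- integrability of the two cross-entropy losses
    (hInt₁ : Integrable (fun ω => -Real.log (fstar (X ω) (Y ω))) μ)
    (hInt₂ : Integrable (fun ω => -Real.log (gstar (Z ω) (Y ω))) μ) :
    (∫ ω, -Real.log (fstar (X ω) (Y ω)) ∂μ) - (∫ ω, -Real.log (gstar (Z ω) (Y ω)) ∂μ) = 0 ↔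
      ∀ k : Fin K, (fun ω => fstar (X ω) k) =ᵐ[μ] (fun ω => gstar (Z ω) k) := by
  classical
  set mask : (Fin d → ℝ) → (Fin d → ℝ) := fun v i => if i ∈ S then 0 else v i with hmaskdef
  have hZeq : Z = mask ∘ X := by
    funext ω
    funext i
    simp only [hmaskdef, Function.comp_apply]
    exact hZ ω i
  have hmask : Measurable mask := by
    apply measurable_pi_lambda
    intro i
    by_cases hi : i ∈ S
    · simp [hmaskdef, hi]
    · simpa [hmaskdef, hi] using measurable_pi_apply i
  have hZmeas : Measurable Z := hZeq ▸ hmask.comp hX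
  have hmX : MeasurableSpace.comap X MeasurableSpace.pi ≤ ‹MeasurableSpace Ω› := hX.comap_le
  have hmZX : MeasurableSpace.comap Z MeasurableSpace.pi
      ≤ MeasurableSpace.comap X MeasurableSpace.pi := by
    have h1 : MeasurableSpace.comap Z MeasurableSpace.pi
        = (MeasurableSpace.pi.comap mask).comap X := by
      rw [MeasurableSpace.comap_comp, ← hZeq]
    rw [h1]
    exact MeasurableSpace.comap_mono hmask.comap_le
  have hmZ : MeasurableSpace.comap Z MeasurableSpace.pi ≤ ‹MeasurableSpace Ω› :=
    hmZX.trans hmX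
  have hXmX : Measurable[MeasurableSpace.comap X MeasurableSpace.pi] X :=
    Measurable.of_comap_le le_rfl
  have hZmZ : Measurable[MeasurableSpace.comap Z MeasurableSpace.pi] Z :=
    Measurable.of_comap_le le_rfl
  set I : Fin K → Ω → ℝ := fun k ω => if Y ω = k then 1 else 0 with hIdef
  have hfstar' : ∀ k, (fun ω => fstar (X ω) k)
      =ᵐ[μ] μ[I k | MeasurableSpace.comap X MeasurableSpace.pi] := fun k => hfstar k
  have hgstar' : ∀ k, (fun ω => gstar (Z ω) k)
      =ᵐ[μ] μ[I k | MeasurableSpace.comap Z MeasurableSpace.pi] := fun k => hgstar k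
  have hImeas : ∀ k, Measurable (I k) := fun k =>
    Measurable.ite (hY (measurableSet_singleton k)) measurable_const measurable_const
  have hIint : ∀ k, Integrable (I k) μ := by
    intro k
    refine (integrable_const (1 : ℝ)).mono' (hImeas k).aestronglyMeasurable ?_
    refine ae_of_all _ fun ω => ?_
    by_cases h : Y ω = k <;> simp [hIdef, h]
  have hfk : ∀ k, Measurable fun v : Fin d → ℝ => fstar v k := fun k =>
    (measurable_pi_apply k).comp hfmeas
  have hgk : ∀ k, Measurable fun v : Fin d → ℝ => gstar v k := fun k =>
    (measurable_pi_apply k).comp hgmeas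
  have hfint : ∀ k, Integrable (fun ω => fstar (X ω) k) μ := fun k =>
    integrable_condExp.congr (hfstar' k).symm
  have hφm : ∀ k, StronglyMeasurable[MeasurableSpace.comap X MeasurableSpace.pi]
      fun ω => -Real.log (fstar (X ω) k) := fun k =>
    ((Real.measurable_log.comp ((hfk k).comp hXmX)).neg).stronglyMeasurable
  have hψm : ∀ k, StronglyMeasurable[MeasurableSpace.comap X MeasurableSpace.pi]
      fun ω => -Real.log (gstar (Z ω) k) := fun k =>
    (((Real.measurable_log.comp ((hgk k).comp hZmZ)).neg).stronglyMeasurable).mono hmZX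
  have hφ0 : ∀ k, Measurable fun ω => -Real.log (fstar (X ω) k) := fun k =>
    (Real.measurable_log.comp ((hfk k).comp hX)).neg
  have hψ0 : ∀ k, Measurable fun ω => -Real.log (gstar (Z ω) k) := fun k =>
    (Real.measurable_log.comp ((hgk k).comp hZmeas)).neg
  have huint : ∀ k, Integrable (fun ω => (-Real.log (fstar (X ω) k)) * I k ω) μ := by
    intro k
    refine hInt₁.mono ((hφ0 k).mul (hImeas k)).aestronglyMeasurable (ae_of_all _ fun ω => ?_)
    by_cases h : Y ω = k
    · simp [hIdef, h]
    · simp [hIdef, h]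
  have hvint : ∀ k, Integrable (fun ω => (-Real.log (gstar (Z ω) k)) * I k ω) μ := by
    intro k
    refine hInt₂.mono ((hψ0 k).mul (hImeas k)).aestronglyMeasurable (ae_of_all _ fun ω => ?_)
    by_cases h : Y ω = k
    · simp [hIdef, h]
    · simp [hIdef, h]
  have hA : (∫ ω, -Real.log (fstar (X ω) (Y ω)) ∂μ)
      = ∑ k, ∫ ω, (-Real.log (fstar (X ω) k)) * I k ω ∂μ := by
    rw [← integral_finset_sum _ fun k _ => huint k]
    refine integral_congr_ae (ae_of_all _ fun ω => ?_)
    simp [hIdef, mul_ite, mul_one, mul_zero, Finset.sum_ite_eq]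
  have hB : (∫ ω, -Real.log (gstar (Z ω) (Y ω)) ∂μ)
      = ∑ k, ∫ ω, (-Real.log (gstar (Z ω) k)) * I k ω ∂μ := by
    rw [← integral_finset_sum _ fun k _ => hvint k]
    refine integral_congr_ae (ae_of_all _ fun ω => ?_)
    simp [hIdef, mul_ite, mul_one, mul_zero, Finset.sum_ite_eq]
  have hAk : ∀ k, Integrable (fun ω => (-Real.log (fstar (X ω) k)) * fstar (X ω) k) μ ∧
      ∫ ω, (-Real.log (fstar (X ω) k)) * I k ω ∂μ
        = ∫ ω, (-Real.log (fstar (X ω) k)) * fstar (X ω) k ∂μ := fun k =>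
    pull_step hmX (hφm k) (hIint k) (huint k) (hfstar' k)
  have hBk : ∀ k, Integrable (fun ω => (-Real.log (gstar (Z ω) k)) * fstar (X ω) k) μ ∧
      ∫ ω, (-Real.log (gstar (Z ω) k)) * I k ω ∂μ
        = ∫ ω, (-Real.log (gstar (Z ω) k)) * fstar (X ω) k ∂μ := fun k =>
    pull_step hmX (hψm k) (hIint k) (hvint k) (hfstar' k)
  set t : Fin K → Ω → ℝ := fun k ω =>
    fstar (X ω) k * (Real.log (gstar (Z ω) k) - Real.log (fstar (X ω) k)) with htdef
  have htint : ∀ k, Integrable (t k) μ := by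
    intro k
    refine ((hAk k).1.sub (hBk k).1).congr (ae_of_all _ fun ω => ?_)
    simp only [htdef, Pi.sub_apply]
    ring
  have hWint : Integrable (fun ω => ∑ k, t k ω) μ := integrable_finset_sum _ fun k _ => htint k
  have hAB : (∫ ω, -Real.log (fstar (X ω) (Y ω)) ∂μ)
      - (∫ ω, -Real.log (gstar (Z ω) (Y ω)) ∂μ) = ∫ ω, ∑ k, t k ω ∂μ := by
    rw [hA, hB, integral_finset_sum _ fun k _ => htint k, ← Finset.sum_sub_distrib]
    refine Finset.sum_congr rfl fun k _ => ?_
    rw [(hAk k).2, (hBk k).2, ← integral_sub (hAk k).1 (hBk k).1]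
    refine integral_congr_ae (ae_of_all _ fun ω => ?_)
    simp only [htdef, Pi.sub_apply]
    ring
  -- a.e. pointwise facts
  have hf0 : ∀ k, ∀ᵐ ω ∂μ, 0 ≤ fstar (X ω) k := by
    intro k
    have h0 : (0 : Ω → ℝ) ≤ᵐ[μ] I k := ae_of_all _ fun ω => by
      by_cases h : Y ω = k <;> simp [hIdef, h]
    filter_upwards [hfstar' k, condExp_nonneg h0] with ω h1 h2
    rw [h1]
    exact h2
  have hg0 : ∀ k, ∀ᵐ ω ∂μ, 0 ≤ gstar (Z ω) k := by
    intro k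
    have h0 : (0 : Ω → ℝ) ≤ᵐ[μ] I k := ae_of_all _ fun ω => by
      by_cases h : Y ω = k <;> simp [hIdef, h]
    filter_upwards [hgstar' k, condExp_nonneg h0] with ω h1 h2
    rw [h1]
    exact h2
  have hIsum : ∀ ω, ∑ k, I k ω = 1 := fun ω => by
    simp [hIdef, Finset.sum_ite_eq]
  have hfsum : ∀ᵐ ω ∂μ, ∑ k, fstar (X ω) k = 1 := by
    have h1 := condExp_finset_sum (μ := μ) (m := MeasurableSpace.comap X MeasurableSpace.pi)
      (s := Finset.univ) (f := I) (fun k _ => hIint k)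
    have h2 : μ[∑ k, I k|MeasurableSpace.comap X MeasurableSpace.pi]
        =ᵐ[μ] μ[fun _ => (1 : ℝ)|MeasurableSpace.comap X MeasurableSpace.pi] :=
      condExp_congr_ae (ae_of_all _ fun ω => by
        simpa [Finset.sum_apply] using hIsum ω)
    have h3 : μ[fun _ : Ω => (1 : ℝ)|MeasurableSpace.comap X MeasurableSpace.pi]
        = fun _ => 1 := condExp_const hmX 1
    have h5 : (∑ k, μ[I k|MeasurableSpace.comap X MeasurableSpace.pi])
        =ᵐ[μ] fun _ => (1 : ℝ) := by
      rw [← h3]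
      exact h1.symm.trans h2
    have h6 := ae_all_iff.2 hfstar'
    filter_upwards [h6, h5] with ω h7 h8
    simp only [Finset.sum_apply] at h8
    rw [Finset.sum_congr rfl fun k _ => h7 k]
    exact h8
  have hgsum : ∀ᵐ ω ∂μ, ∑ k, gstar (Z ω) k = 1 := by
    have h1 := condExp_finset_sum (μ := μ) (m := MeasurableSpace.comap Z MeasurableSpace.pi)
      (s := Finset.univ) (f := I) (fun k _ => hIint k)
    have h2 : μ[∑ k, I k|MeasurableSpace.comap Z MeasurableSpace.pi]
        =ᵐ[μ] μ[fun _ => (1 : ℝ)|MeasurableSpace.comap Z MeasurableSpace.pi] :=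
      condExp_congr_ae (ae_of_all _ fun ω => by
        simpa [Finset.sum_apply] using hIsum ω)
    have h3 : μ[fun _ : Ω => (1 : ℝ)|MeasurableSpace.comap Z MeasurableSpace.pi]
        = fun _ => 1 := condExp_const hmZ 1
    have h5 : (∑ k, μ[I k|MeasurableSpace.comap Z MeasurableSpace.pi])
        =ᵐ[μ] fun _ => (1 : ℝ) := by
      rw [← h3]
      exact h1.symm.trans h2
    have h6 := ae_all_iff.2 hgstar'
    filter_upwards [h6, h5] with ω h7 h8
    simp only [Finset.sum_apply] at h8
    rw [Finset.sum_congr rfl fun k _ => h7 k]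
    exact h8
  have hzero : ∀ k, ∀ᵐ ω ∂μ, gstar (Z ω) k = 0 → fstar (X ω) k = 0 := by
    intro k
    have hsZ : MeasurableSet[MeasurableSpace.comap Z MeasurableSpace.pi]
        {ω | gstar (Z ω) k = 0} :=
      ⟨(fun v => gstar v k) ⁻¹' {0}, (hgk k) (measurableSet_singleton 0), rfl⟩
    have hsX : MeasurableSet[MeasurableSpace.comap X MeasurableSpace.pi]
        {ω | gstar (Z ω) k = 0} := hmZX _ hsZ
    have hs0 : MeasurableSet {ω | gstar (Z ω) k = 0} := hmZ _ hsZ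
    have e1 : ∫ ω in {ω | gstar (Z ω) k = 0}, fstar (X ω) k ∂μ
        = ∫ ω in {ω | gstar (Z ω) k = 0}, I k ω ∂μ := by
      calc ∫ ω in {ω | gstar (Z ω) k = 0}, fstar (X ω) k ∂μ
          = ∫ ω in {ω | gstar (Z ω) k = 0},
              (μ[I k|MeasurableSpace.comap X MeasurableSpace.pi]) ω ∂μ :=
            setIntegral_congr_ae hs0 ((hfstar' k).mono fun ω hω _ => hω)
        _ = ∫ ω in {ω | gstar (Z ω) k = 0}, I k ω ∂μ :=
            setIntegral_condExp hmX (hIint k) hsX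
    have e2 : ∫ ω in {ω | gstar (Z ω) k = 0}, gstar (Z ω) k ∂μ
        = ∫ ω in {ω | gstar (Z ω) k = 0}, I k ω ∂μ := by
      calc ∫ ω in {ω | gstar (Z ω) k = 0}, gstar (Z ω) k ∂μ
          = ∫ ω in {ω | gstar (Z ω) k = 0},
              (μ[I k|MeasurableSpace.comap Z MeasurableSpace.pi]) ω ∂μ :=
            setIntegral_congr_ae hs0 ((hgstar' k).mono fun ω hω _ => hω)
        _ = ∫ ω in {ω | gstar (Z ω) k = 0}, I k ω ∂μ :=
            setIntegral_condExp hmZ (hIint k) hsZ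
    have e3 : ∫ ω in {ω | gstar (Z ω) k = 0}, gstar (Z ω) k ∂μ = 0 := by
      calc ∫ ω in {ω | gstar (Z ω) k = 0}, gstar (Z ω) k ∂μ
          = ∫ _ in {ω | gstar (Z ω) k = 0}, (0 : ℝ) ∂μ :=
            setIntegral_congr_ae hs0 (ae_of_all _ fun ω hω => hω)
        _ = 0 := by simp
    have e4 := (setIntegral_eq_zero_iff_of_nonneg_ae
      (ae_restrict_of_ae (hf0 k)) (hfint k).integrableOn).1 (e1.trans (e2.symm.trans e3))
    have e5 := (ae_restrict_iff' hs0).1 e4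
    filter_upwards [e5] with ω hω hg
    simpa using hω hg
  have hpt : ∀ᵐ ω ∂μ, (∀ k, 0 ≤ fstar (X ω) k) ∧ (∀ k, 0 ≤ gstar (Z ω) k) ∧
      (∑ k, fstar (X ω) k = 1) ∧ (∑ k, gstar (Z ω) k = 1) ∧
      (∀ k, gstar (Z ω) k = 0 → fstar (X ω) k = 0) := by
    filter_upwards [ae_all_iff.2 hf0, ae_all_iff.2 hg0, hfsum, hgsum, ae_all_iff.2 hzero]
      with ω a b c dd e
    exact ⟨a, b, c, dd, e⟩
  have hWle : ∀ᵐ ω ∂μ, (∑ k, t k ω) ≤ 0 := by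
    filter_upwards [hpt] with ω hω
    obtain ⟨ha, hb, hc, hd, he⟩ := hω
    calc ∑ k, t k ω ≤ ∑ k, (gstar (Z ω) k - fstar (X ω) k) := by
          refine Finset.sum_le_sum fun k _ => ?_
          simpa only [htdef] using gibbs_le (ha k) (hb k) (he k)
      _ = 0 := by rw [Finset.sum_sub_distrib, hc, hd, sub_self]
  rw [hAB]
  constructor
  · intro hint0
    have hWeq : (fun ω => ∑ k, t k ω) =ᵐ[μ] 0 := by
      have hneg : 0 ≤ᵐ[μ] fun ω => -(∑ k, t k ω) := by
        filter_upwards [hWle] with ω h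
        simp only [Pi.zero_apply]
        linarith
      have hi0 : ∫ ω, -(∑ k, t k ω) ∂μ = 0 := by
        rw [integral_neg, hint0, neg_zero]
      have h0 := (integral_eq_zero_iff_of_nonneg_ae hneg hWint.neg).1 hi0
      filter_upwards [h0] with ω h
      simpa using neg_eq_zero.1 (by simpa using h)
    intro k
    filter_upwards [hWeq, hpt] with ω hW hω
    obtain ⟨ha, hb, hc, hd, he⟩ := hω
    have hle : ∀ j ∈ Finset.univ, t j ω ≤ gstar (Z ω) j - fstar (X ω) j := fun j _ => by
      simpa only [htdef] using gibbs_le (ha j) (hb j) (he j)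
    have hsums : ∑ j, t j ω = ∑ j, (gstar (Z ω) j - fstar (X ω) j) := by
      rw [Finset.sum_sub_distrib, hc, hd, sub_self]
      simpa using hW
    have heq := (Finset.sum_eq_sum_iff_of_le hle).1 hsums k (Finset.mem_univ k)
    simp only [htdef] at heq
    exact gibbs_eq (ha k) (hb k) (he k) heq
  · intro h
    have hW0 : (fun ω => ∑ k, t k ω) =ᵐ[μ] 0 := by
      filter_upwards [ae_all_iff.2 h] with ω hω
      have hz : ∀ k, t k ω = 0 := fun k => by
        simp [htdef, hω k]
      simp [hz]
    rw [integral_congr_ae hW0]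
    simp
end

section
/- Let P_1,...,P_U be random variables each asymptotically uniform on [0,1] in the sense that lim_{n→∞} P(P_u ≤ t) = t for each t ∈ [0,1] and each u (no independence assumed). For a fixed integer 1 ≤ q ≤ U, define the q-order combined p-value P̄ = min((U/q)·P_{(q)}, 1), where P_{(q)} is the q-th order statistic. Then for any 0 < α < 1, limsup_{n→∞} P(P̄ ≤ α) ≤ α. -/
open MeasureTheory ProbabilityTheory Filter Topology
open scoped ENNReal

/-- The `q`-th smallest entry (0-indexed) of a finite tuple of reals. -/
noncomputable def orderStat {U : ℕ} (x : Fin U → ℝ) (q : Fin U) : ℝ :=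
  x (Tuple.sort x q)

lemma orderStat_le_iff {U : ℕ} (x : Fin U → ℝ) (q : ℕ) (h1 : 1 ≤ q) (hU : q ≤ U) (t : ℝ) :
    orderStat x ⟨q - 1, Nat.lt_of_lt_of_le (Nat.sub_lt h1 Nat.one_pos) hU⟩ ≤ t ↔ q ≤ Fintype.card {u // x u ≤ t} := by
  have h := Tuple.lt_card_le_iff_apply_le_of_monotone (f := x ∘ Tuple.sort x) (a := t)
    (j := ⟨q - 1, by omega⟩) (Tuple.monotone_sort x)
  rw [← Fintype.card_subtype] at h
  have hcard : Fintype.card {i // (x ∘ Tuple.sort x) i ≤ t} = Fintype.card {u // x u ≤ t} :=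
    Fintype.card_congr ((Tuple.sort x).subtypeEquiv (fun i => Iff.rfl))
  rw [hcard] at h
  have : orderStat x ⟨q - 1, by omega⟩ = (x ∘ Tuple.sort x) ⟨q - 1, by omega⟩ := rfl
  rw [this, ← h]
  simp only [Fin.val_mk]
  omega

lemma markov_count {Ω : Type*} [MeasurableSpace Ω] (μ : Measure Ω)
    {U : ℕ} (f : Fin U → Ω → ℝ) (hmeas : ∀ u, Measurable (f u))
    (q : ℕ) (t : ℝ) :
    (q : ℝ≥0∞) * μ {ω | q ≤ Fintype.card {u // f u ω ≤ t}} ≤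
      ∑ u : Fin U, μ {ω | f u ω ≤ t} := by
  set N : Ω → ℝ≥0∞ := fun ω => ∑ u : Fin U, Set.indicator {ω | f u ω ≤ t} 1 ω with hN
  have hmeasN : Measurable N := by
    apply Finset.measurable_sum
    intro u _
    exact (measurable_const.indicator (measurableSet_le (hmeas u) measurable_const))
  have hNeq : ∀ ω, N ω = (Fintype.card {u // f u ω ≤ t} : ℝ≥0∞) := by
    intro ω
    rw [hN]
    simp only [Fintype.card_subtype]
    rw [Finset.card_filter]
    push_cast
    apply Finset.sum_congr rfl
    intro u _
    by_cases h : f u ω ≤ t <;> simp [Set.indicator, h]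
  have hsub : {ω | q ≤ Fintype.card {u // f u ω ≤ t}} ⊆ {ω | (q : ℝ≥0∞) ≤ N ω} := by
    intro ω hω
    rw [Set.mem_setOf_eq, hNeq ω]
    exact_mod_cast hω
  calc (q : ℝ≥0∞) * μ {ω | q ≤ Fintype.card {u // f u ω ≤ t}}
      ≤ (q : ℝ≥0∞) * μ {ω | (q : ℝ≥0∞) ≤ N ω} := by
        exact mul_le_mul_right (μ.mono hsub) _
    _ ≤ ∫⁻ ω, N ω ∂μ := mul_meas_ge_le_lintegral₀ hmeasN.aemeasurable _
    _ = ∑ u : Fin U, μ {ω | f u ω ≤ t} := by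
        simp only [hN]
        rw [lintegral_finset_sum]
        · exact Finset.sum_congr rfl fun u _ =>
            lintegral_indicator_one (measurableSet_le (hmeas u) measurable_const)
        · exact fun u _ =>
            measurable_const.indicator (measurableSet_le (hmeas u) measurable_const)

/-- Type I error control of the `q`-order combined test: if the p-values
`P n 1, …, P n U` are each asymptotically uniform on `[0,1]` (no independence assumed),
then the combined p-value `P̄ = min((U/q) P_{(q)}, 1)` satisfies
`limsup_n P(P̄ ≤ α) ≤ α` for every `0 < α < 1`. -/
theorem q_order_combined_type1
    {Ω : Type*} [MeasurableSpace Ω] (μ : Measure Ω) [IsProbabilityMeasure μ]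
    {U : ℕ} (P : ℕ → Fin U → Ω → ℝ)
    (hmeas : ∀ n u, Measurable (P n u))
    -- each marginal p-value is asymptotically uniform on `[0,1]`
    (hUnif : ∀ u : Fin U, ∀ t ∈ Set.Icc (0:ℝ) 1,
      Tendsto (fun n => (μ {ω | P n u ω ≤ t}).toReal) atTop (𝓝 t))
    (q : ℕ) (hq1 : 1 ≤ q) (hqU : q ≤ U)
    (α : ℝ) (hα : α ∈ Set.Ioo (0:ℝ) 1) :
    Filter.limsup
      (fun n => (μ {ω | min (((U : ℝ) / q) *
        orderStat (fun u => P n u ω) ⟨q - 1, by omega⟩) 1 ≤ α}).toReal) atTop ≤ α := by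
  obtain ⟨hα0, hα1⟩ := hα
  have hUpos : (0:ℝ) < U := by exact_mod_cast (by omega : 0 < U)
  have hqpos : (0:ℝ) < q := by exact_mod_cast hq1
  set t : ℝ := (q : ℝ) * α / U with ht
  have ht0 : 0 ≤ t := by positivity
  have ht1 : t ≤ 1 := by
    rw [ht, div_le_one hUpos]
    calc (q:ℝ) * α ≤ (q:ℝ) * 1 := by nlinarith
      _ ≤ U := by simpa using (by exact_mod_cast hqU : (q:ℝ) ≤ U)
  -- rewrite the event
  have hevent : ∀ n, {ω | min (((U : ℝ) / q) *
        orderStat (fun u => P n u ω) ⟨q - 1, by omega⟩) 1 ≤ α}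
      = {ω | q ≤ Fintype.card {u // P n u ω ≤ t}} := by
    intro n
    ext ω
    simp only [Set.mem_setOf_eq]
    rw [← orderStat_le_iff (fun u => P n u ω) q hq1 hqU t]
    constructor
    · intro h
      rcases min_le_iff.mp h with h | h
      · rw [div_mul_eq_mul_div, div_le_iff₀ hqpos] at h
        rw [ht, le_div_iff₀ hUpos]
        linarith [h]
      · linarith
    · intro h
      refine min_le_of_left_le ?_
      rw [div_mul_eq_mul_div, div_le_iff₀ hqpos]
      rw [ht, le_div_iff₀ hUpos] at h
      linarith [h]
  -- pointwise bound
  set g : ℕ → ℝ := fun n => (∑ u : Fin U, (μ {ω | P n u ω ≤ t}).toReal) / q with hg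
  have hbound : ∀ n, (μ {ω | min (((U : ℝ) / q) *
        orderStat (fun u => P n u ω) ⟨q - 1, by omega⟩) 1 ≤ α}).toReal ≤ g n := by
    intro n
    rw [hevent n]
    have key := markov_count μ (P n) (hmeas n) q t
    have hfin : ∀ u : Fin U, μ {ω | P n u ω ≤ t} ≠ ∞ := fun u => measure_ne_top μ _
    have key' := ENNReal.toReal_mono (ENNReal.sum_ne_top.mpr (fun u _ => hfin u)) key
    rw [ENNReal.toReal_mul, ENNReal.toReal_sum (fun u _ => hfin u), ENNReal.toReal_natCast] at key'
    rw [hg, le_div_iff₀ hqpos]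
    linarith [key']
  -- g tends to α
  have hgt : Tendsto g atTop (𝓝 α) := by
    have hsum : Tendsto (fun n => ∑ u : Fin U, (μ {ω | P n u ω ≤ t}).toReal) atTop
        (𝓝 (∑ _u : Fin U, t)) :=
      tendsto_finset_sum _ (fun u _ => hUnif u t ⟨ht0, ht1⟩)
    have : (∑ _u : Fin U, t) / (q:ℝ) = α := by
      rw [Finset.sum_const, Finset.card_univ, Fintype.card_fin, nsmul_eq_mul, ht]
      field_simp
    have h2 : Tendsto (fun n => (∑ u : Fin U, (μ {ω | P n u ω ≤ t}).toReal) / (q:ℝ)) atTop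
        (𝓝 ((∑ _u : Fin U, t) / (q:ℝ))) := hsum.div_const _
    rw [this] at h2
    exact h2
  -- conclude via limsup
  have hls : Filter.limsup g atTop = α := hgt.limsup_eq
  refine le_trans (Filter.limsup_le_limsup (Filter.Eventually.of_forall hbound) ?_ ?_) hls.le
  · apply Filter.IsBoundedUnder.isCoboundedUnder_le
    exact ⟨0, Filter.eventually_map.mpr
      (Filter.Eventually.of_forall fun n => ENNReal.toReal_nonneg)⟩
  · exact hgt.isBoundedUnder_le
end

section
/- Let P_1,...,P_U be exactly uniform on [0,1] (arbitrarily dependent). Define the Hommel combined p-value P̄ = min(C_U · min_{1≤q≤U} (U/q) P_{(q)}, 1) with C_U = Σ_{q=1}^U 1/q. Then for any 0 < α < 1, P(P̄ ≤ α) ≤ α. -/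
open MeasureTheory ProbabilityTheory Filter Topology
open scoped ENNReal NNReal

lemma orderStat_card_le {U : ℕ} (x : Fin U → ℝ) (q : Fin U) {t : ℝ}
    (h : orderStat x q ≤ t) :
    (q : ℕ) + 1 ≤ (Finset.univ.filter (fun u => x u ≤ t)).card := by
  have hsub : (Finset.Iic q).image (Tuple.sort x) ⊆
      Finset.univ.filter (fun u => x u ≤ t) := by
    intro u hu
    simp only [Finset.mem_image, Finset.mem_Iic] at hu
    obtain ⟨p, hp, rfl⟩ := hu
    simp only [Finset.mem_filter, Finset.mem_univ, true_and]
    exact le_trans (Tuple.monotone_sort x hp) h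
  calc (q : ℕ) + 1 = (Finset.Iic q).card := (Fin.card_Iic q).symm
    _ = ((Finset.Iic q).image (Tuple.sort x)).card :=
        (Finset.card_image_of_injective _ (Tuple.sort x).injective).symm
    _ ≤ _ := Finset.card_le_card hsub

lemma hommel_telescope (a : ℕ) (ha : 1 ≤ a) :
    ∀ U : ℕ, a ≤ U →
      ∑ i ∈ Finset.Ico a U, (1 : ℝ) / (i * (i + 1)) = 1 / a - 1 / U := by
  intro U
  induction U with
  | zero => intro h; omega
  | succ n ih =>
    intro h
    rcases Nat.lt_or_ge a (n + 1) with h' | h'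
    · have han : a ≤ n := by omega
      have hn0 : (0 : ℝ) < n := by exact_mod_cast (by omega : 0 < n)
      rw [Finset.sum_Ico_succ_top han, ih han]
      have ha0 : (a : ℝ) ≠ 0 := by positivity
      field_simp
      push_cast; ring
    · have : a = n + 1 := le_antisymm h h'
      subst this
      simp

lemma hommel_key_comb (U i0 : ℕ) (h1 : 1 ≤ i0) (h2 : i0 ≤ U) (n : ℕ → ℝ)
    (hmono : ∀ i j : ℕ, i ≤ j → n i ≤ n j) (hi0 : (i0 : ℝ) ≤ n i0)
    (hnn : ∀ i, 0 ≤ n i) :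
    1 ≤ ∑ i ∈ Finset.Ico 1 U, n i / (i * (i + 1)) + n U / U := by
  have hi00 : (0 : ℝ) < i0 := by exact_mod_cast h1
  have hU0 : (0 : ℝ) < U := by exact_mod_cast lt_of_lt_of_le h1 h2
  have step1 : (1 : ℝ) = ∑ i ∈ Finset.Ico i0 U, (i0 : ℝ) / (i * (i + 1)) + (i0 : ℝ) / U := by
    rw [show (∑ i ∈ Finset.Ico i0 U, (i0 : ℝ) / (i * (i + 1)))
        = (i0 : ℝ) * ∑ i ∈ Finset.Ico i0 U, (1 : ℝ) / (i * (i + 1)) by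
      rw [Finset.mul_sum]; exact Finset.sum_congr rfl fun i _ => by ring]
    rw [hommel_telescope i0 h1 U h2]
    field_simp
    ring
  have step2 : ∑ i ∈ Finset.Ico i0 U, (i0 : ℝ) / (i * (i + 1)) + (i0 : ℝ) / U
      ≤ ∑ i ∈ Finset.Ico i0 U, n i / (i * (i + 1)) + n U / U := by
    apply add_le_add
    · apply Finset.sum_le_sum
      intro i hi
      obtain ⟨hi1, hi2⟩ := Finset.mem_Ico.1 hi
      have : (i0 : ℝ) ≤ n i := le_trans hi0 (hmono i0 i hi1)
      have hipos : (0 : ℝ) < i * (i + 1) := by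
        have : (0:ℝ) < i := by exact_mod_cast lt_of_lt_of_le h1 hi1
        positivity
      exact div_le_div_of_nonneg_right this hipos.le
    · have : (i0 : ℝ) ≤ n U := le_trans hi0 (hmono i0 U h2)
      exact div_le_div_of_nonneg_right this hU0.le
  have step3 : ∑ i ∈ Finset.Ico i0 U, n i / (i * (i + 1))
      ≤ ∑ i ∈ Finset.Ico 1 U, n i / (i * (i + 1)) := by
    apply Finset.sum_le_sum_of_subset_of_nonneg
    · exact Finset.Ico_subset_Ico h1 le_rfl
    · intro i _ _
      have h1i : (0:ℝ) ≤ i := by positivity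
      have : (0:ℝ) ≤ i * (i+1) := by positivity
      exact div_nonneg (hnn i) this
  linarith

set_option maxHeartbeats 1600000 in
/-- Hommel's inequality: for arbitrarily dependent p-values `P 1, …, P U`, each exactly
uniform on `[0,1]`, the Hommel combined p-value
`P̄ = min(C_U · min_{1 ≤ q ≤ U} (U/q) P_{(q)}, 1)` with `C_U = ∑_{q=1}^U 1/q`
satisfies `P(P̄ ≤ α) ≤ α` for every `0 < α < 1`. -/
theorem hommel_combined_type1
    {Ω : Type*} [MeasurableSpace Ω] (μ : Measure Ω) [IsProbabilityMeasure μ]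
    {U : ℕ} (hU : 2 ≤ U) (P : Fin U → Ω → ℝ)
    (hmeas : ∀ u, Measurable (P u))
    -- each marginal p-value is exactly uniform on `[0,1]`
    (hUnif : ∀ u : Fin U, ∀ t ∈ Set.Icc (0:ℝ) 1,
      μ {ω | P u ω ≤ t} = ENNReal.ofReal t)
    (α : ℝ) (hα : α ∈ Set.Ioo (0:ℝ) 1) :
    μ {ω | min ((∑ q ∈ Finset.range U, (1 : ℝ) / (q + 1)) *
        ⨅ q : Fin U, ((U : ℝ) / ((q : ℕ) + 1)) * orderStat (fun u => P u ω) q) 1 ≤ α}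
      ≤ ENNReal.ofReal α := by
  obtain ⟨hα0, hα1⟩ := hα
  set C : ℝ := ∑ q ∈ Finset.range U, (1 : ℝ) / (q + 1) with hC
  have hC1 : 1 ≤ C := by
    have h0 : (0 : ℕ) ∈ Finset.range U := Finset.mem_range.2 (by omega)
    have h := Finset.single_le_sum (f := fun q : ℕ => (1 : ℝ) / (q + 1))
      (fun i _ => by positivity) h0
    simp only [Nat.cast_zero, zero_add, div_one] at h
    rw [hC]
    exact h
  have hC0 : (0 : ℝ) < C := lt_of_lt_of_le one_pos hC1
  have hU0 : (0 : ℝ) < U := by exact_mod_cast (by omega : 0 < U)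
  set t : ℕ → ℝ := fun i => α * i / (C * U) with ht
  have ht_nonneg : ∀ i : ℕ, 0 ≤ t i := fun i => by
    have : (0:ℝ) ≤ i := by positivity
    rw [ht]; positivity
  have ht_mem : ∀ i : ℕ, i ≤ U → t i ∈ Set.Icc (0 : ℝ) 1 := by
    intro i hi
    refine ⟨ht_nonneg i, ?_⟩
    rw [ht]
    rw [div_le_one (by positivity)]
    have hiU : (i : ℝ) ≤ U := by exact_mod_cast hi
    nlinarith
  have ht_mono : Monotone t := by
    intro i j hij
    have hij' : (i : ℝ) ≤ j := by exact_mod_cast hij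
    have h1 : α * (i : ℝ) ≤ α * j := by nlinarith
    exact div_le_div_of_nonneg_right h1 (by positivity)
  set N : ℕ → Ω → ℕ := fun i ω => (Finset.univ.filter (fun u : Fin U => P u ω ≤ t i)).card
    with hN
  set E' : Set Ω := {ω | ∃ i : ℕ, 1 ≤ i ∧ i ≤ U ∧ i ≤ N i ω} with hE'
  -- inclusion of the event into the counting event
  have hsub : {ω | min (C *
      ⨅ q : Fin U, ((U : ℝ) / ((q : ℕ) + 1)) * orderStat (fun u => P u ω) q) 1 ≤ α}
      ⊆ E' := by
    intro ω hω
    haveI : Nonempty (Fin U) := ⟨⟨0, by omega⟩⟩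
    simp only [Set.mem_setOf_eq] at hω
    set f : Fin U → ℝ := fun q => ((U : ℝ) / ((q : ℕ) + 1)) * orderStat (fun u => P u ω) q
      with hf
    have hlt : C * (⨅ q : Fin U, f q) ≤ α := by
      rcases min_le_iff.1 hω with h | h
      · exact h
      · linarith
    obtain ⟨q0, -, hq0⟩ := Finset.exists_min_image Finset.univ f
      ⟨⟨0, by omega⟩, Finset.mem_univ _⟩
    have hinf : (⨅ q : Fin U, f q) = f q0 :=
      le_antisymm (ciInf_le (Set.finite_range f).bddBelow q0)
        (le_ciInf fun b => hq0 b (Finset.mem_univ b))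
    rw [hinf] at hlt
    set d : ℝ := (q0 : ℕ) + 1 with hd
    have hd0 : (0 : ℝ) < d := by positivity
    have hos : orderStat (fun u => P u ω) q0 ≤ t ((q0 : ℕ) + 1) := by
      rw [ht]
      rw [le_div_iff₀ (by positivity)]
      have h2 : C * f q0 * d ≤ α * d := mul_le_mul_of_nonneg_right hlt hd0.le
      have h3 : C * f q0 * d = orderStat (fun u => P u ω) q0 * (C * U) := by
        rw [hf]
        field_simp
        ring
      rw [h3] at h2
      push_cast
      push_cast [hd] at h2
      linarith
    have hcard := orderStat_card_le (fun u => P u ω) q0 hos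
    exact ⟨(q0 : ℕ) + 1, by omega, by omega, hcard⟩
  -- measurability infrastructure
  have hsetm : ∀ (u : Fin U) (r : ℝ), MeasurableSet {ω | P u ω ≤ r} := by
    intro u r
    exact hmeas u measurableSet_Iic
  have hNcast : ∀ (i : ℕ) (ω : Ω), ((N i ω : ℝ≥0∞)) =
      ∑ u : Fin U, ({ω' | P u ω' ≤ t i}).indicator (fun _ => (1 : ℝ≥0∞)) ω := by
    intro i ω
    rw [hN]
    simp only [Finset.card_filter, Nat.cast_sum, Nat.cast_ite, Nat.cast_one, Nat.cast_zero,
      Set.indicator_apply, Set.mem_setOf_eq]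
  have hNm : ∀ i : ℕ, Measurable (fun ω => (N i ω : ℝ≥0∞)) := by
    intro i
    have : (fun ω => (N i ω : ℝ≥0∞)) =
        fun ω => ∑ u : Fin U, ({ω' | P u ω' ≤ t i}).indicator (fun _ => (1 : ℝ≥0∞)) ω :=
      funext (hNcast i)
    rw [this]
    exact Finset.measurable_sum _ fun u _ =>
      Measurable.indicator measurable_const (hsetm u _)
  have hE'm : MeasurableSet E' := by
    have : E' = ⋃ i ∈ Finset.Icc 1 U, {ω | ((i : ℝ≥0∞)) ≤ (N i ω : ℝ≥0∞)} := by
      ext ω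
      simp only [hE', Set.mem_setOf_eq, Set.mem_iUnion, Finset.mem_Icc, Nat.cast_le,
        exists_prop]
      tauto
    rw [this]
    exact MeasurableSet.biUnion (Finset.countable_toSet _)
      fun i _ => measurableSet_le measurable_const (hNm i)
  -- expectation of counts
  have hNint : ∀ i : ℕ, i ≤ U →
      ∫⁻ ω, (N i ω : ℝ≥0∞) ∂μ = (U : ℝ≥0∞) * ENNReal.ofReal (t i) := by
    intro i hi
    calc ∫⁻ ω, (N i ω : ℝ≥0∞) ∂μ
        = ∫⁻ ω, ∑ u : Fin U, ({ω' | P u ω' ≤ t i}).indicator (fun _ => (1 : ℝ≥0∞)) ω ∂μ :=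
          lintegral_congr fun ω => hNcast i ω
      _ = ∑ u : Fin U, ∫⁻ ω, ({ω' | P u ω' ≤ t i}).indicator (fun _ => (1 : ℝ≥0∞)) ω ∂μ :=
          lintegral_finset_sum _ fun u _ =>
            Measurable.indicator measurable_const (hsetm u _)
      _ = ∑ u : Fin U, μ {ω | P u ω ≤ t i} :=
          Finset.sum_congr rfl fun u _ => lintegral_indicator_one (hsetm u _)
      _ = ∑ _u : Fin U, ENNReal.ofReal (t i) :=
          Finset.sum_congr rfl fun u _ => hUnif u (t i) (ht_mem i hi)
      _ = (U : ℝ≥0∞) * ENNReal.ofReal (t i) := by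
          simp [Finset.sum_const, Finset.card_univ, nsmul_eq_mul]
  -- pointwise indicator bound
  set c : ℕ → ℝ≥0∞ := fun i => ENNReal.ofReal (1 / (i * (i + 1))) with hc
  set cU : ℝ≥0∞ := ENNReal.ofReal (1 / U) with hcU
  have hterm_eq : ∀ (i : ℕ) (ω : Ω),
      c i * (N i ω : ℝ≥0∞) = ENNReal.ofReal ((N i ω : ℝ) / (i * (i + 1))) := by
    intro i ω
    rw [show ((N i ω : ℝ) / (i * (i + 1))) = (1 / ((i : ℝ) * (i + 1))) * (N i ω : ℝ) by ring,
      ENNReal.ofReal_mul (by positivity), ENNReal.ofReal_natCast]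
  have htermU_eq : ∀ ω : Ω,
      cU * (N U ω : ℝ≥0∞) = ENNReal.ofReal ((N U ω : ℝ) / U) := by
    intro ω
    rw [show ((N U ω : ℝ) / U) = (1 / (U : ℝ)) * (N U ω : ℝ) by ring,
      ENNReal.ofReal_mul (by positivity), ENNReal.ofReal_natCast]
  have hpt : ∀ ω : Ω, E'.indicator (fun _ => (1 : ℝ≥0∞)) ω ≤
      ∑ i ∈ Finset.Ico 1 U, c i * (N i ω : ℝ≥0∞) + cU * (N U ω : ℝ≥0∞) := by
    intro ω
    by_cases h : ω ∈ E'
    · rw [Set.indicator_of_mem h]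
      obtain ⟨i0, h1, h2, h3⟩ := h
      have hmonoN : ∀ i j : ℕ, i ≤ j → ((N i ω : ℝ)) ≤ (N j ω : ℝ) := by
        intro i j hij
        have : N i ω ≤ N j ω := by
          apply Finset.card_le_card
          exact Finset.monotone_filter_right _ (fun u _ hu => le_trans hu (ht_mono hij))
        exact_mod_cast this
      have hreal : (1 : ℝ) ≤ ∑ i ∈ Finset.Ico 1 U, (N i ω : ℝ) / (i * (i + 1))
          + (N U ω : ℝ) / U :=
        hommel_key_comb U i0 h1 h2 (fun i => (N i ω : ℝ)) hmonoN
          (show ((i0 : ℕ) : ℝ) ≤ ((N i0 ω : ℕ) : ℝ) by exact_mod_cast h3)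
          (fun i => Nat.cast_nonneg _)
      have nn1 : ∀ i ∈ Finset.Ico 1 U, (0 : ℝ) ≤ (N i ω : ℝ) / (i * (i + 1)) := by
        intro i _
        have h0 : (0 : ℝ) ≤ (i : ℝ) := Nat.cast_nonneg i
        exact div_nonneg (Nat.cast_nonneg _) (by nlinarith)
      have nn2 : (0 : ℝ) ≤ ∑ i ∈ Finset.Ico 1 U, (N i ω : ℝ) / (i * (i + 1)) :=
        Finset.sum_nonneg nn1
      have nn3 : (0 : ℝ) ≤ (N U ω : ℝ) / U :=
        div_nonneg (Nat.cast_nonneg _) (Nat.cast_nonneg _)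
      calc (1 : ℝ≥0∞) = ENNReal.ofReal 1 := ENNReal.ofReal_one.symm
        _ ≤ ENNReal.ofReal (∑ i ∈ Finset.Ico 1 U, (N i ω : ℝ) / (i * (i + 1))
              + (N U ω : ℝ) / U) := ENNReal.ofReal_le_ofReal hreal
        _ = ∑ i ∈ Finset.Ico 1 U, c i * (N i ω : ℝ≥0∞) + cU * (N U ω : ℝ≥0∞) := by
            rw [ENNReal.ofReal_add nn2 nn3, ENNReal.ofReal_sum_of_nonneg nn1]
            exact congrArg₂ (· + ·)
              (Finset.sum_congr rfl fun i _ => (hterm_eq i ω).symm) (htermU_eq ω).symm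
    · rw [Set.indicator_of_notMem h]
      exact zero_le
  -- main chain
  calc μ {ω | min (C *
      ⨅ q : Fin U, ((U : ℝ) / ((q : ℕ) + 1)) * orderStat (fun u => P u ω) q) 1 ≤ α}
      ≤ μ E' := measure_mono hsub
    _ = ∫⁻ ω, E'.indicator (fun _ => (1 : ℝ≥0∞)) ω ∂μ := (lintegral_indicator_one hE'm).symm
    _ ≤ ∫⁻ ω, (∑ i ∈ Finset.Ico 1 U, c i * (N i ω : ℝ≥0∞) + cU * (N U ω : ℝ≥0∞)) ∂μ :=
        lintegral_mono hpt
    _ = ∑ i ∈ Finset.Ico 1 U, c i * ((U : ℝ≥0∞) * ENNReal.ofReal (t i))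
        + cU * ((U : ℝ≥0∞) * ENNReal.ofReal (t U)) := by
        rw [lintegral_add_left (Finset.measurable_sum _ fun i _ => (hNm i).const_mul _)]
        rw [lintegral_finset_sum _ fun i _ => (hNm i).const_mul _]
        rw [lintegral_const_mul _ (hNm U), hNint U le_rfl]
        congr 1
        exact Finset.sum_congr rfl fun i hi => by
          rw [lintegral_const_mul _ (hNm i), hNint i (Finset.mem_Ico.1 hi).2.le]
    _ = ENNReal.ofReal α := by
        have hconv : ∀ i : ℕ, c i * ((U : ℝ≥0∞) * ENNReal.ofReal (t i))
            = ENNReal.ofReal ((1 / (i * (i + 1)) : ℝ) * ((U : ℝ) * t i)) := by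
          intro i
          rw [← ENNReal.ofReal_natCast U, ← ENNReal.ofReal_mul (by positivity),
            ← ENNReal.ofReal_mul (by positivity)]
        have hconvU : cU * ((U : ℝ≥0∞) * ENNReal.ofReal (t U))
            = ENNReal.ofReal ((1 / U : ℝ) * ((U : ℝ) * t U)) := by
          rw [← ENNReal.ofReal_natCast U, ← ENNReal.ofReal_mul (by positivity),
            ← ENNReal.ofReal_mul (by positivity)]
        rw [hconvU, Finset.sum_congr rfl fun i _ => hconv i,
          ← ENNReal.ofReal_sum_of_nonneg (fun i _ => by
            have := ht_nonneg i
            positivity),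
          ← ENNReal.ofReal_add (by
            apply Finset.sum_nonneg
            intro i _
            have := ht_nonneg i
            positivity) (by
            have := ht_nonneg U
            positivity)]
        congr 1
        -- final real computation
        have hstep : ∀ i ∈ Finset.Ico 1 U,
            (1 / (i * (i + 1)) : ℝ) * ((U : ℝ) * t i) = (α / C) * (1 / (i + 1)) := by
          intro i hi
          have hi1 : 1 ≤ i := (Finset.mem_Ico.1 hi).1
          have hi0 : ((i : ℝ)) ≠ 0 := by
            have : (0:ℝ) < i := by exact_mod_cast hi1
            exact ne_of_gt this
          rw [ht]
          field_simp
        rw [Finset.sum_congr rfl hstep, ← Finset.mul_sum]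
        have hsum : ∑ i ∈ Finset.Ico 1 U, (1 : ℝ) / (i + 1) = C - 1 := by
          have hsplit : (∑ i ∈ Finset.Ico (0:ℕ) 1, (1 : ℝ) / (i + 1))
              + ∑ i ∈ Finset.Ico 1 U, (1 : ℝ) / (i + 1)
              = ∑ i ∈ Finset.Ico 0 U, (1 : ℝ) / (i + 1) :=
            Finset.sum_Ico_consecutive _ (by omega) (by omega)
          have : C = ∑ i ∈ Finset.Ico 0 U, (1 : ℝ) / (i + 1) := by
            rw [hC, Finset.range_eq_Ico]
          rw [this]
          simp only [Nat.Ico_zero_eq_range] at hsplit ⊢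
          rw [← hsplit]
          norm_num
        rw [hsum]
        have hlast : (1 / U : ℝ) * ((U : ℝ) * t U) = α / C := by
          rw [ht]
          field_simp
        rw [hlast]
        field_simp
        ring
end

section
/- Let Z ~ N(0,1) and a ∈ R. Then Var(Φ(Z + a)) = Φ(a/√2) - Φ(a/√2)² - 2T(a/√2, 1/√3), where T(h, b) = (1/(2π)) ∫_0^b exp(-h²(1+x²)/2)/(x²+1) dx is Owen's T function. -/
open MeasureTheory ProbabilityTheory Filter

/-- The standard normal cumulative distribution function. -/
noncomputable def stdGaussianCDF (t : ℝ) : ℝ :=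
  ((gaussianReal 0 1) (Set.Iic t)).toReal

/-- Owen's T function `T(h, b) = (1/(2π)) ∫_0^b exp(-h²(1+x²)/2)/(x²+1) dx`. -/
noncomputable def owenT (h b : ℝ) : ℝ :=
  (1 / (2 * Real.pi)) * ∫ x in (0:ℝ)..b, Real.exp (-h ^ 2 * (1 + x ^ 2) / 2) / (x ^ 2 + 1)

noncomputable def phi (x : ℝ) : ℝ := (Real.sqrt (2*Real.pi))⁻¹ * Real.exp (-x^2/2)

lemma phi_eq_pdf (x : ℝ) : phi x = gaussianPDFReal 0 1 x := by
  simp [phi, gaussianPDFReal, neg_div]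

lemma phi_pos (x : ℝ) : 0 < phi x := by
  rw [phi_eq_pdf]; exact gaussianPDFReal_pos 0 1 x one_ne_zero

lemma phi_nonneg (x : ℝ) : 0 ≤ phi x := (phi_pos x).le

lemma continuous_phi : Continuous phi := by
  unfold phi
  fun_prop

lemma integrable_phi : Integrable phi := by
  simp only [funext phi_eq_pdf]
  exact integrable_gaussianPDFReal 0 1

lemma integral_phi : ∫ x, phi x = 1 := by
  simp only [funext phi_eq_pdf]
  exact integral_gaussianPDFReal_eq_one 0 one_ne_zero

lemma phi_le (x : ℝ) : phi x ≤ (Real.sqrt (2*Real.pi))⁻¹ := by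
  have h1 : Real.exp (-x^2/2) ≤ 1 := by
    rw [Real.exp_le_one_iff]; nlinarith [sq_nonneg x]
  have h2 : (0:ℝ) < (Real.sqrt (2*Real.pi))⁻¹ := by positivity
  calc phi x ≤ (Real.sqrt (2*Real.pi))⁻¹ * 1 := by
        exact mul_le_mul_of_nonneg_left h1 h2.le
    _ = _ := mul_one _

lemma stdGaussianCDF_eq (t : ℝ) : stdGaussianCDF t = ∫ x in Set.Iic t, phi x := by
  rw [stdGaussianCDF, gaussianReal_apply_eq_integral 0 one_ne_zero, ENNReal.toReal_ofReal]
  · simp only [funext phi_eq_pdf]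
  · exact setIntegral_nonneg measurableSet_Iic fun x _ => gaussianPDFReal_nonneg 0 1 x

lemma stdGaussianCDF_nonneg (t : ℝ) : 0 ≤ stdGaussianCDF t := ENNReal.toReal_nonneg

lemma stdGaussianCDF_le_one (t : ℝ) : stdGaussianCDF t ≤ 1 := by
  rw [stdGaussianCDF]
  exact ENNReal.toReal_le_of_le_ofReal one_pos.le (by simpa using prob_le_one)

lemma stdGaussianCDF_eq_add (t : ℝ) :
    stdGaussianCDF t = stdGaussianCDF 0 + ∫ x in (0:ℝ)..t, phi x := by
  rw [stdGaussianCDF_eq, stdGaussianCDF_eq,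
    ← intervalIntegral.integral_Iic_sub_Iic integrable_phi.integrableOn
      integrable_phi.integrableOn]
  ring

lemma hasDerivAt_stdGaussianCDF (t : ℝ) : HasDerivAt stdGaussianCDF (phi t) t := by
  have : HasDerivAt (fun u => stdGaussianCDF 0 + ∫ x in (0:ℝ)..u, phi x) (phi t) t := by
    refine HasDerivAt.const_add _ ?_
    exact intervalIntegral.integral_hasDerivAt_right
      (integrable_phi.intervalIntegrable)
      (continuous_phi.stronglyMeasurable.stronglyMeasurableAtFilter)
      continuous_phi.continuousAt
  exact this.congr_of_eventuallyEq (Eventually.of_forall fun u => stdGaussianCDF_eq_add u)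

lemma continuous_stdGaussianCDF : Continuous stdGaussianCDF :=
  continuous_iff_continuousAt.2 fun t => (hasDerivAt_stdGaussianCDF t).continuousAt

lemma measurable_stdGaussianCDF : Measurable stdGaussianCDF :=
  continuous_stdGaussianCDF.measurable

lemma tendsto_stdGaussianCDF_atBot : Tendsto stdGaussianCDF atBot (nhds 0) := by
  have h : Tendsto (fun t => ((gaussianReal 0 1) (Set.Iic t))) atBot (nhds 0) := by
    have h0 : (⋂ t : ℝ, Set.Iic t) = ∅ := by
      ext x
      simp only [Set.mem_iInter, Set.mem_Iic, Set.mem_empty_iff_false, iff_false, not_forall]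
      exact ⟨x - 1, by linarith⟩
    have := tendsto_measure_iInter_atBot (μ := gaussianReal 0 1)
      (s := fun t : ℝ => Set.Iic t) (fun t => measurableSet_Iic.nullMeasurableSet)
      (fun a b hab => Set.Iic_subset_Iic.2 hab) ⟨0, measure_ne_top _ _⟩
    rw [h0] at this
    simpa [Function.comp_def] using this
  have := (ENNReal.tendsto_toReal (by simp)).comp h
  exact this

lemma integral_phi_mul_phi (c d : ℝ) :
    ∫ x, phi (c*x + d) * phi x
      = phi (d / Real.sqrt (1+c^2)) / Real.sqrt (1+c^2) := by
  set s : ℝ := 1 + c^2 with hs_def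
  have hs : 0 < s := by positivity
  have h2pi : (0:ℝ) < 2 * Real.pi := by positivity
  have hpoint : ∀ x, phi (c*x + d) * phi x
      = ((2*Real.pi)⁻¹ * Real.exp (-d^2/(2*s))) * Real.exp (-(s/2) * (x + c*d/s)^2) := by
    intro x
    unfold phi
    have e1 : Real.exp (-(c*x+d)^2/2) * Real.exp (-x^2/2)
        = Real.exp (-(c*x+d)^2/2 + -x^2/2) := (Real.exp_add _ _).symm
    have e2 : Real.exp (-d^2/(2*s)) * Real.exp (-(s/2)*(x + c*d/s)^2)
        = Real.exp (-d^2/(2*s) + -(s/2)*(x + c*d/s)^2) := (Real.exp_add _ _).symm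
    rw [mul_mul_mul_comm, e1, ← mul_inv, Real.mul_self_sqrt h2pi.le,
      mul_assoc ((2*Real.pi)⁻¹), e2]
    congr 1
    have hs0 : s ≠ 0 := hs.ne'
    congr 1
    field_simp
    ring
  rw [funext hpoint, MeasureTheory.integral_const_mul]
  have hshift : ∫ x : ℝ, Real.exp (-(s/2) * (x + c*d/s)^2)
      = ∫ x : ℝ, Real.exp (-(s/2) * x^2) :=
    integral_add_right_eq_self (fun y => Real.exp (-(s/2) * y^2)) (c*d/s)
  rw [hshift, integral_gaussian]
  have hss : Real.sqrt s * Real.sqrt s = s := Real.mul_self_sqrt hs.le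
  have hsqs : (0:ℝ) < Real.sqrt s := Real.sqrt_pos.2 hs
  have h1 : Real.sqrt (Real.pi / (s/2)) = Real.sqrt (2*Real.pi) / Real.sqrt s := by
    rw [← Real.sqrt_div' _ (by positivity)]
    · congr 1
      field_simp
  rw [h1]
  unfold phi
  have harg : (d / Real.sqrt s)^2 = d^2 / s := by
    rw [div_pow, Real.sq_sqrt hs.le]
  rw [harg]
  have h3 : -(d^2/s)/2 = -d^2/(2*s) := by
    field_simp
  rw [h3]
  have hc : Real.sqrt (2*Real.pi) / Real.sqrt s * Real.sqrt s = Real.sqrt (2*Real.pi) :=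
    div_mul_cancel₀ _ hsqs.ne'
  have key : (2*Real.pi)⁻¹ * Real.sqrt (2*Real.pi) = (Real.sqrt (2*Real.pi))⁻¹ := by
    rw [← Real.mul_self_sqrt h2pi.le, mul_inv]
    field_simp
    rw [Real.sqrt_sq (Real.sqrt_nonneg _)]
  rw [eq_div_iff hsqs.ne']
  calc (2*Real.pi)⁻¹ * Real.exp (-d^2/(2*s)) * (Real.sqrt (2*Real.pi) / Real.sqrt s) * Real.sqrt s
      = (2*Real.pi)⁻¹ * Real.sqrt (2*Real.pi) * Real.exp (-d^2/(2*s)) := by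
        rw [mul_assoc ((2*Real.pi)⁻¹ * Real.exp (-d^2/(2*s))), hc]; ring
    _ = _ := by rw [key]

lemma eq_of_hasDerivAt_of_tendsto_atBot {F G f : ℝ → ℝ}
    (hF : ∀ x, HasDerivAt F (f x) x) (hG : ∀ x, HasDerivAt G (f x) x)
    (hFb : Tendsto F atBot (nhds 0)) (hGb : Tendsto G atBot (nhds 0)) : F = G := by
  have hH : ∀ x, HasDerivAt (fun y => F y - G y) 0 x := by
    intro x; simpa [Pi.sub_def] using (hF x).sub (hG x)
  have hdiff : Differentiable ℝ (fun y => F y - G y) := fun x => (hH x).differentiableAt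
  have hconst : ∀ x y : ℝ, F x - G x = F y - G y := by
    intro x y
    exact is_const_of_deriv_eq_zero hdiff (fun z => (hH z).deriv) x y
  funext x
  have h1 : Tendsto (fun y => F y - G y) atBot (nhds (F x - G x)) := by
    have : (fun y => F y - G y) = fun _ => F x - G x := funext fun y => (hconst y x)
    rw [this]; exact tendsto_const_nhds
  have h2 := tendsto_nhds_unique h1 (hFb.sub hGb)
  simp only [sub_zero] at h2
  linarith [h2]

lemma integrable_cdf_mul_phi (g : ℝ → ℝ) (hg : Measurable g) :
    Integrable (fun x => stdGaussianCDF (g x) * phi x) := by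
  refine integrable_phi.mono ((measurable_stdGaussianCDF.comp hg).mul
    continuous_phi.measurable).aestronglyMeasurable (Eventually.of_forall fun x => ?_)
  rw [Real.norm_eq_abs, Real.norm_eq_abs, abs_mul, abs_of_nonneg (stdGaussianCDF_nonneg _),
    abs_of_nonneg (phi_nonneg _)]
  exact mul_le_of_le_one_left (phi_nonneg _) (stdGaussianCDF_le_one _)

lemma integral_cdf_mul_phi (c d : ℝ) :
    ∫ x, stdGaussianCDF (c*x + d) * phi x = stdGaussianCDF (d / Real.sqrt (1+c^2)) := by
  have hs : (0:ℝ) < Real.sqrt (1+c^2) := Real.sqrt_pos.2 (by positivity)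
  set F : ℝ → ℝ := fun d => ∫ x, stdGaussianCDF (c*x + d) * phi x with hF_def
  set G : ℝ → ℝ := fun d => stdGaussianCDF (d / Real.sqrt (1+c^2)) with hG_def
  have hbd : ∀ u (x : ℝ), ‖phi (c*x + u) * phi x‖ ≤ (Real.sqrt (2*Real.pi))⁻¹ * phi x := by
    intro u x
    rw [Real.norm_eq_abs, abs_mul, abs_of_nonneg (phi_nonneg _), abs_of_nonneg (phi_nonneg _)]
    exact mul_le_mul_of_nonneg_right (phi_le _) (phi_nonneg _)
  have hderivF : ∀ u : ℝ, HasDerivAt F (phi (u / Real.sqrt (1+c^2)) / Real.sqrt (1+c^2)) u := by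
    intro u
    have key := hasDerivAt_integral_of_dominated_loc_of_deriv_le (μ := volume)
      (F := fun (v : ℝ) (x : ℝ) => stdGaussianCDF (c*x + v) * phi x)
      (F' := fun (v : ℝ) (x : ℝ) => phi (c*x + v) * phi x)
      (x₀ := u) (bound := fun x => (Real.sqrt (2*Real.pi))⁻¹ * phi x) (Metric.ball_mem_nhds _ one_pos)
      (Eventually.of_forall fun v => ((measurable_stdGaussianCDF.comp
        (by fun_prop : Measurable fun x : ℝ => c*x + v)).mul
        continuous_phi.measurable).aestronglyMeasurable)
      (integrable_cdf_mul_phi _ (by fun_prop))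
      (((continuous_phi.comp (by fun_prop : Continuous fun x : ℝ => c*x + u)).mul
        continuous_phi).measurable).aestronglyMeasurable
      (Eventually.of_forall fun x v _ => hbd v x)
      (integrable_phi.const_mul _)
      (Eventually.of_forall fun x v _ => ?_)
    · rw [integral_phi_mul_phi c u] at key
      exact key.2
    · have h1 : HasDerivAt (fun v : ℝ => c*x + v) 1 v := (hasDerivAt_id v).const_add (c*x)
      have h2 := (hasDerivAt_stdGaussianCDF (c*x + v)).comp v h1
      simpa using h2.mul_const (phi x)
  have hderivG : ∀ u : ℝ, HasDerivAt G (phi (u / Real.sqrt (1+c^2)) / Real.sqrt (1+c^2)) u := by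
    intro u
    have h1 : HasDerivAt (fun v : ℝ => v / Real.sqrt (1+c^2)) (1 / Real.sqrt (1+c^2)) u :=
      (hasDerivAt_id u).div_const _
    have h2 := (hasDerivAt_stdGaussianCDF (u / Real.sqrt (1+c^2))).comp u h1
    simpa [div_eq_mul_inv, mul_comm, hG_def, Function.comp_def] using h2
  have hFb : Tendsto F atBot (nhds 0) := by
    have h0 : Tendsto (fun (u : ℝ) => (0:ℝ)) atBot (nhds 0) := tendsto_const_nhds
    have := tendsto_integral_filter_of_dominated_convergence (μ := volume)
      (F := fun (v : ℝ) (x : ℝ) => stdGaussianCDF (c*x + v) * phi x)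
      (f := fun _ : ℝ => (0:ℝ)) (bound := phi)
      (Eventually.of_forall fun v => ((measurable_stdGaussianCDF.comp
        (by fun_prop : Measurable fun x : ℝ => c*x + v)).mul
        continuous_phi.measurable).aestronglyMeasurable)
      (Eventually.of_forall fun v => Eventually.of_forall fun x => by
        rw [Real.norm_eq_abs, abs_mul, abs_of_nonneg (stdGaussianCDF_nonneg _),
          abs_of_nonneg (phi_nonneg _)]
        exact mul_le_of_le_one_left (phi_nonneg _) (stdGaussianCDF_le_one _))
      integrable_phi
      (Eventually.of_forall fun x => by
        have h1 : Tendsto (fun v : ℝ => c*x + v) atBot atBot := tendsto_atBot_add_const_left _ _ tendsto_id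
        have h2 := tendsto_stdGaussianCDF_atBot.comp h1
        simpa using h2.mul_const (phi x))
    simpa using this
  have hGb : Tendsto G atBot (nhds 0) := by
    have h1 : Tendsto (fun u : ℝ => u / Real.sqrt (1+c^2)) atBot atBot :=
      tendsto_id.atBot_div_const hs
    exact tendsto_stdGaussianCDF_atBot.comp h1
  have := eq_of_hasDerivAt_of_tendsto_atBot hderivF hderivG hFb hGb
  exact congrFun this d

lemma stdGaussianCDF_zero : stdGaussianCDF 0 = 1/2 := by
  have heven : ∀ x : ℝ, phi (-x) = phi x := by
    intro x; unfold phi; rw [neg_pow]; norm_num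
  have h1 : ∫ x in Set.Iic (0:ℝ), phi x = ∫ x in Set.Ioi (0:ℝ), phi x := by
    have := integral_comp_neg_Iic 0 phi
    simp only [heven, neg_zero] at this
    exact this.symm ▸ rfl
  have h2 : (∫ x in Set.Iic (0:ℝ), phi x) + ∫ x in Set.Ioi (0:ℝ), phi x = 1 := by
    rw [intervalIntegral.integral_Iic_add_Ioi integrable_phi.integrableOn
      integrable_phi.integrableOn]
    exact integral_phi
  rw [stdGaussianCDF_eq]
  linarith

lemma integral_phi_interval (t : ℝ) :
    ∫ u in (0:ℝ)..t, phi u = stdGaussianCDF t - 1/2 := by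
  have := stdGaussianCDF_eq_add t
  rw [stdGaussianCDF_zero] at this
  linarith

lemma hasDerivAt_owenT {b : ℝ} (hb : 0 < b) (h : ℝ) :
    HasDerivAt (fun v => owenT v b) (-phi h * (stdGaussianCDF (h*b) - 1/2)) h := by
  have hIoc : ∀ v : ℝ, owenT v b
      = (1/(2*Real.pi)) * ∫ x in Set.Ioc (0:ℝ) b, Real.exp (-v^2*(1+x^2)/2) / (x^2+1) := by
    intro v
    rw [owenT, intervalIntegral.integral_of_le hb.le]
  -- derivative of the inner integral
  have hJ : HasDerivAt
      (fun v : ℝ => ∫ x in Set.Ioc (0:ℝ) b, Real.exp (-v^2*(1+x^2)/2) / (x^2+1))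
      (∫ x in Set.Ioc (0:ℝ) b, -h * Real.exp (-h^2*(1+x^2)/2)) h := by
    have key := hasDerivAt_integral_of_dominated_loc_of_deriv_le
      (μ := volume.restrict (Set.Ioc (0:ℝ) b))
      (F := fun (v : ℝ) (x : ℝ) => Real.exp (-v^2*(1+x^2)/2) / (x^2+1))
      (F' := fun (v : ℝ) (x : ℝ) => -v * Real.exp (-v^2*(1+x^2)/2))
      (x₀ := h) (bound := fun _ => |h| + 1) (Metric.ball_mem_nhds _ one_pos)
      (Eventually.of_forall fun v => (by fun_prop (disch := intro x; positivity) :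
        Continuous fun x : ℝ => Real.exp (-v^2*(1+x^2)/2) / (x^2+1)).aestronglyMeasurable)
      ?_ ?_ ?_ ?_ ?_
    · exact key.2
    · refine (Integrable.mono (integrable_const (1:ℝ))
        (by fun_prop (disch := intro x; positivity) :
          Continuous fun x : ℝ => Real.exp (-h^2*(1+x^2)/2) / (x^2+1)).aestronglyMeasurable
        (Eventually.of_forall fun x => ?_))
      show ‖Real.exp (-h^2*(1+x^2)/2) / (x^2+1)‖ ≤ ‖(1:ℝ)‖
      rw [Real.norm_eq_abs, abs_div, abs_of_nonneg (Real.exp_nonneg _),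
        abs_of_nonneg (by positivity : (0:ℝ) ≤ x^2+1), norm_one,
        div_le_one (by positivity)]
      calc Real.exp (-h^2*(1+x^2)/2) ≤ 1 := by
            rw [Real.exp_le_one_iff]; nlinarith [sq_nonneg h, sq_nonneg x]
        _ ≤ x^2 + 1 := by nlinarith [sq_nonneg x]
    · exact (by fun_prop : Continuous fun x : ℝ =>
        -h * Real.exp (-h^2*(1+x^2)/2)).aestronglyMeasurable
    · refine Eventually.of_forall fun x => fun v hv => ?_
      rw [Real.norm_eq_abs, abs_mul, abs_neg, abs_of_nonneg (Real.exp_nonneg _)]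
      have h1 : Real.exp (-v^2*(1+x^2)/2) ≤ 1 := by
        rw [Real.exp_le_one_iff]; nlinarith [sq_nonneg v, sq_nonneg x]
      have h2 : |v| ≤ |h| + 1 := by
        have := abs_sub_abs_le_abs_sub v h
        have hd : |v - h| < 1 := by simpa [Real.dist_eq] using Metric.mem_ball.1 hv
        linarith
      calc |v| * Real.exp (-v^2*(1+x^2)/2) ≤ |v| * 1 :=
            mul_le_mul_of_nonneg_left h1 (abs_nonneg v)
        _ ≤ |h| + 1 := by rw [mul_one]; exact h2
    · exact integrable_const _
    · refine Eventually.of_forall fun x => fun v hv => ?_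
      have hu : HasDerivAt (fun v : ℝ => -v^2*(1+x^2)/2) (-v*(1+x^2)) v := by
        have h0 : HasDerivAt (fun v : ℝ => v^2) (2*v) v := by
          simpa using hasDerivAt_pow 2 v
        have h0' := h0.const_mul (-(1+x^2)/2)
        convert h0' using 1
        · rfl
        · rfl
        · funext y; ring
        · ring
      have he := (Real.hasDerivAt_exp (-v^2*(1+x^2)/2)).comp v hu
      have := he.div_const (x^2+1)
      refine this.congr_deriv ?_
      symm
      have hx : x^2 + 1 ≠ 0 := by positivity
      field_simp
      ring
  -- evaluate the derivative integral
  have heval : (∫ x in Set.Ioc (0:ℝ) b, -h * Real.exp (-h^2*(1+x^2)/2))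
      = -Real.exp (-h^2/2) * (Real.sqrt (2*Real.pi) * (stdGaussianCDF (h*b) - 1/2)) := by
    rw [← intervalIntegral.integral_of_le hb.le]
    have hpt : ∀ x : ℝ, -h * Real.exp (-h^2*(1+x^2)/2)
        = (-Real.exp (-h^2/2)) * (h * Real.exp (-(h*x)^2/2)) := by
      intro x
      rw [mul_comm (-Real.exp (-h^2/2)), mul_assoc, neg_mul, mul_neg, ← Real.exp_add]
      rw [neg_mul]
      congr 2
      ring
    simp only [hpt]
    rw [intervalIntegral.integral_const_mul, intervalIntegral.integral_const_mul]
    congr 1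
    have hsub : (h * ∫ x in (0:ℝ)..b, Real.exp (-(h*x)^2/2))
        = ∫ u in (0:ℝ)..(h*b), Real.exp (-u^2/2) := by
      have := intervalIntegral.mul_integral_comp_mul_left
        (a := (0:ℝ)) (b := b) (c := h) (f := fun u => Real.exp (-u^2/2))
      simpa using this
    rw [hsub]
    have hphi : ∀ u : ℝ, Real.exp (-u^2/2) = Real.sqrt (2*Real.pi) * phi u := by
      intro u
      unfold phi
      rw [← mul_assoc, mul_inv_cancel₀ (by positivity), one_mul]
    simp only [hphi]
    rw [intervalIntegral.integral_const_mul, integral_phi_interval]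
  rw [heval] at hJ
  have htotal := hJ.const_mul (1/(2*Real.pi))
  have : (fun v => owenT v b)
      = fun v => (1/(2*Real.pi)) * ∫ x in Set.Ioc (0:ℝ) b, Real.exp (-v^2*(1+x^2)/2) / (x^2+1) :=
    funext hIoc
  rw [this]
  have h2pi : (0:ℝ) < 2*Real.pi := by positivity
  have hss : Real.sqrt (2*Real.pi) * Real.sqrt (2*Real.pi) = 2*Real.pi :=
    Real.mul_self_sqrt h2pi.le
  have hkey : (1/(2*Real.pi)) * Real.sqrt (2*Real.pi) = (Real.sqrt (2*Real.pi))⁻¹ := by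
    rw [← hss]; field_simp; rw [Real.sqrt_sq (Real.sqrt_nonneg _)]
  have e : (1/(2*Real.pi)) * (-Real.exp (-h^2/2)
        * (Real.sqrt (2*Real.pi) * (stdGaussianCDF (h*b) - 1/2)))
      = -phi h * (stdGaussianCDF (h*b) - 1/2) := by
    unfold phi
    linear_combination (-Real.exp (-h^2/2) * (stdGaussianCDF (h*b) - 1/2)) * hkey
  exact e ▸ htotal

lemma sqrt2_sq : (Real.sqrt 2)^2 = (2:ℝ) := Real.sq_sqrt (by norm_num)

lemma integral_cdf_mul_phi_mul_phi (a : ℝ) :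
    ∫ x, stdGaussianCDF (x+a) * (phi (x+a) * phi x)
      = phi (a/Real.sqrt 2) * ((Real.sqrt 2)⁻¹ * stdGaussianCDF (a/Real.sqrt 6)) := by
  have hr2 : (0:ℝ) < Real.sqrt 2 := Real.sqrt_pos.2 (by norm_num)
  have hr6 : (0:ℝ) < Real.sqrt 6 := Real.sqrt_pos.2 (by norm_num)
  have hprod : ∀ x, phi (x+a) * phi x
      = phi (a/Real.sqrt 2) * phi (Real.sqrt 2 * (x + a/2)) := by
    intro x
    unfold phi
    have hexp : -(x + a)^2/2 + -x^2/2
        = -(a/Real.sqrt 2)^2/2 + -(Real.sqrt 2*(x+a/2))^2/2 := by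
      rw [div_pow, sqrt2_sq, mul_pow, sqrt2_sq]; ring
    calc (Real.sqrt (2*Real.pi))⁻¹ * Real.exp (-(x+a)^2/2)
          * ((Real.sqrt (2*Real.pi))⁻¹ * Real.exp (-x^2/2))
        = (Real.sqrt (2*Real.pi))⁻¹ * (Real.sqrt (2*Real.pi))⁻¹
          * Real.exp (-(x+a)^2/2 + -x^2/2) := by rw [Real.exp_add]; ring
      _ = (Real.sqrt (2*Real.pi))⁻¹ * (Real.sqrt (2*Real.pi))⁻¹
          * Real.exp (-(a/Real.sqrt 2)^2/2 + -(Real.sqrt 2*(x+a/2))^2/2) := by rw [hexp]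
      _ = _ := by rw [Real.exp_add]; ring
  have hpt : ∀ x, stdGaussianCDF (x+a) * (phi (x+a) * phi x)
      = phi (a/Real.sqrt 2)
        * (stdGaussianCDF ((x + a/2) + a/2) * phi (Real.sqrt 2 * (x + a/2))) := by
    intro x
    rw [hprod x, show x + a = x + a/2 + a/2 by ring]
    ring
  rw [funext hpt, MeasureTheory.integral_const_mul]
  congr 1
  rw [integral_add_right_eq_self
    (fun t => stdGaussianCDF (t + a/2) * phi (Real.sqrt 2 * t)) (a/2)]
  have hpt2 : ∀ t : ℝ, stdGaussianCDF (t + a/2) * phi (Real.sqrt 2 * t)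
      = (fun u => stdGaussianCDF ((Real.sqrt 2)⁻¹ * u + a/2) * phi u) (Real.sqrt 2 * t) := by
    intro t
    simp only
    rw [inv_mul_cancel_left₀ hr2.ne']
  rw [funext hpt2, Measure.integral_comp_mul_left
    (fun u => stdGaussianCDF ((Real.sqrt 2)⁻¹ * u + a/2) * phi u) (Real.sqrt 2)]
  rw [integral_cdf_mul_phi ((Real.sqrt 2)⁻¹) (a/2)]
  rw [smul_eq_mul, abs_of_nonneg (by positivity)]
  congr 2
  have h1 : (1 + ((Real.sqrt 2)⁻¹)^2 : ℝ) = 6/4 := by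
    rw [inv_pow, sqrt2_sq]; norm_num
  rw [h1]
  have h4 : Real.sqrt 4 = 2 := by
    rw [show (4:ℝ) = 2^2 by norm_num, Real.sqrt_sq (by norm_num)]
  rw [Real.sqrt_div (by norm_num : (0:ℝ) ≤ 6), h4]
  field_simp

lemma sqrt6_eq : Real.sqrt 6 = Real.sqrt 2 * Real.sqrt 3 := by
  rw [show (6:ℝ) = 2*3 by norm_num, Real.sqrt_mul (by norm_num)]

lemma abs_owenT_le {b : ℝ} (hb : 0 < b) (h : ℝ) :
    |owenT h b| ≤ (1/(2*Real.pi)) * (Real.exp (-h^2/2) * b) := by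
  rw [owenT, abs_mul, abs_of_nonneg (by positivity : (0:ℝ) ≤ 1/(2*Real.pi))]
  refine mul_le_mul_of_nonneg_left ?_ (by positivity)
  have := intervalIntegral.norm_integral_le_of_norm_le_const
    (C := Real.exp (-h^2/2)) (a := (0:ℝ)) (b := b)
    (f := fun x => Real.exp (-h ^ 2 * (1 + x ^ 2) / 2) / (x ^ 2 + 1)) ?_
  · rw [Real.norm_eq_abs] at this
    calc |∫ x in (0:ℝ)..b, Real.exp (-h ^ 2 * (1 + x ^ 2) / 2) / (x ^ 2 + 1)|
        ≤ Real.exp (-h^2/2) * |b - 0| := this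
      _ = Real.exp (-h^2/2) * b := by rw [sub_zero, abs_of_nonneg hb.le]
  · intro x _
    rw [Real.norm_eq_abs, abs_div, abs_of_nonneg (Real.exp_nonneg _),
      abs_of_nonneg (by positivity : (0:ℝ) ≤ x^2+1)]
    calc Real.exp (-h^2*(1+x^2)/2) / (x^2+1) ≤ Real.exp (-h^2*(1+x^2)/2) / 1 := by
          apply div_le_div_of_nonneg_left (Real.exp_nonneg _) (by norm_num)
          nlinarith [sq_nonneg x]
      _ = Real.exp (-h^2*(1+x^2)/2) := div_one _
      _ ≤ Real.exp (-h^2/2) := by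
          apply Real.exp_le_exp.2
          nlinarith [sq_nonneg h, sq_nonneg x]

lemma tendsto_exp_neg_sq : Tendsto (fun h : ℝ => Real.exp (-h^2/2)) atBot (nhds 0) := by
  apply Real.tendsto_exp_atBot.comp
  apply tendsto_atBot_mono' atBot ?_ tendsto_id
  filter_upwards [eventually_le_atBot (-2:ℝ)] with h hh
  show -h^2/2 ≤ h
  nlinarith

lemma integral_cdf_sq_mul_phi (a : ℝ) :
    ∫ x, stdGaussianCDF (x+a)^2 * phi x
      = stdGaussianCDF (a/Real.sqrt 2) - 2 * owenT (a/Real.sqrt 2) (1/Real.sqrt 3) := by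
  have hr2 : (0:ℝ) < Real.sqrt 2 := Real.sqrt_pos.2 (by norm_num)
  have hr3 : (0:ℝ) < Real.sqrt 3 := Real.sqrt_pos.2 (by norm_num)
  have hss2 : Real.sqrt 2 * Real.sqrt 2 = 2 := Real.mul_self_sqrt (by norm_num)
  have hb3 : (0:ℝ) < 1/Real.sqrt 3 := by positivity
  have harg : ∀ u : ℝ, u/Real.sqrt 2 * (1/Real.sqrt 3) = u/Real.sqrt 6 := by
    intro u
    rw [sqrt6_eq]
    field_simp
  set f : ℝ → ℝ := fun u => Real.sqrt 2 * (phi (u/Real.sqrt 2) * stdGaussianCDF (u/Real.sqrt 6))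
    with hf_def
  set F : ℝ → ℝ := fun v => ∫ x, stdGaussianCDF (x+v)^2 * phi x with hF_def
  set G : ℝ → ℝ := fun v => stdGaussianCDF (v/Real.sqrt 2)
    - 2 * owenT (v/Real.sqrt 2) (1/Real.sqrt 3) with hG_def
  have hmeasF : ∀ v : ℝ, AEStronglyMeasurable (fun x => stdGaussianCDF (x+v)^2 * phi x) volume := by
    intro v
    exact (((measurable_stdGaussianCDF.comp (by fun_prop : Measurable fun x : ℝ => x + v)).pow_const 2).mul
      continuous_phi.measurable).aestronglyMeasurable
  have hboundF : ∀ (v x : ℝ), ‖stdGaussianCDF (x+v)^2 * phi x‖ ≤ phi x := by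
    intro v x
    rw [Real.norm_eq_abs, abs_mul, abs_of_nonneg (by positivity : (0:ℝ) ≤ stdGaussianCDF (x+v)^2),
      abs_of_nonneg (phi_nonneg _)]
    refine mul_le_of_le_one_left (phi_nonneg _) ?_
    calc stdGaussianCDF (x+v)^2 ≤ 1^2 := by
          apply pow_le_pow_left₀ (stdGaussianCDF_nonneg _) (stdGaussianCDF_le_one _)
      _ = 1 := one_pow 2
  have hderivF : ∀ u : ℝ, HasDerivAt F (f u) u := by
    intro u
    have key := hasDerivAt_integral_of_dominated_loc_of_deriv_le (μ := volume)
      (F := fun (v : ℝ) (x : ℝ) => stdGaussianCDF (x+v)^2 * phi x)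
      (F' := fun (v : ℝ) (x : ℝ) => 2 * (stdGaussianCDF (x+v) * (phi (x+v) * phi x)))
      (x₀ := u) (bound := fun x => 2 * ((Real.sqrt (2*Real.pi))⁻¹ * phi x)) (Metric.ball_mem_nhds _ one_pos)
      (Eventually.of_forall hmeasF)
      ((integrable_phi.mono (hmeasF u) (Eventually.of_forall (fun x => by
        simpa only [Real.norm_eq_abs, abs_of_nonneg (phi_nonneg x)] using hboundF u x))))
      ((((measurable_stdGaussianCDF.comp (by fun_prop : Measurable fun x : ℝ => x + u)).mul
        ((continuous_phi.measurable.comp (by fun_prop : Measurable fun x : ℝ => x + u)).mul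
          continuous_phi.measurable)).const_mul 2).aestronglyMeasurable)
      (Eventually.of_forall fun x v _ => ?_)
      ((integrable_phi.const_mul _).const_mul 2)
      (Eventually.of_forall fun x v _ => ?_)
    · have heq := integral_cdf_mul_phi_mul_phi u
      rw [MeasureTheory.integral_const_mul, heq] at key
      have key2 := key.2
      have : 2 * (phi (u/Real.sqrt 2) * ((Real.sqrt 2)⁻¹ * stdGaussianCDF (u/Real.sqrt 6)))
          = f u := by
        rw [hf_def]
        field_simp
        linear_combination (-(phi (u/Real.sqrt 2) * stdGaussianCDF (u/Real.sqrt 6))) * hss2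
      rwa [this] at key2
    · rw [Real.norm_eq_abs, abs_mul, abs_two, abs_mul, abs_mul,
        abs_of_nonneg (stdGaussianCDF_nonneg _), abs_of_nonneg (phi_nonneg _),
        abs_of_nonneg (phi_nonneg _)]
      refine mul_le_mul_of_nonneg_left ?_ (by norm_num)
      calc stdGaussianCDF (x+v) * (phi (x+v) * phi x) ≤ 1 * (phi (x+v) * phi x) := by
            apply mul_le_mul_of_nonneg_right (stdGaussianCDF_le_one _)
              (mul_nonneg (phi_nonneg _) (phi_nonneg _))
        _ = phi (x+v) * phi x := one_mul _
        _ ≤ (Real.sqrt (2*Real.pi))⁻¹ * phi x :=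
            mul_le_mul_of_nonneg_right (phi_le _) (phi_nonneg _)
    · have h1 : HasDerivAt (fun v : ℝ => x + v) 1 v := (hasDerivAt_id v).const_add x
      have h2 := (hasDerivAt_stdGaussianCDF (x + v)).comp v h1
      have h3 := (h2.pow 2).mul_const (phi x)
      refine h3.congr_deriv ?_
      symm
      simp only [mul_one, pow_one, Function.comp_apply]
      ring
  have hderivG : ∀ u : ℝ, HasDerivAt G (f u) u := by
    intro u
    have h1 : HasDerivAt (fun v : ℝ => v / Real.sqrt 2) (1/Real.sqrt 2) u :=
      (hasDerivAt_id u).div_const _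
    have hPhi := (hasDerivAt_stdGaussianCDF (u / Real.sqrt 2)).comp u h1
    have hT := ((hasDerivAt_owenT hb3 (u / Real.sqrt 2)).comp u h1).const_mul 2
    have hG' := hPhi.sub hT
    refine hG'.congr_deriv ?_
    symm
    rw [harg u, hf_def]
    field_simp
    linear_combination (phi (u/Real.sqrt 2) * stdGaussianCDF (u/Real.sqrt 6)
      ) * hss2
  have hFb : Tendsto F atBot (nhds 0) := by
    have := tendsto_integral_filter_of_dominated_convergence (μ := volume)
      (F := fun (v : ℝ) (x : ℝ) => stdGaussianCDF (x+v)^2 * phi x)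
      (f := fun _ : ℝ => (0:ℝ)) (bound := phi)
      (Eventually.of_forall hmeasF)
      (Eventually.of_forall fun v => Eventually.of_forall fun x => hboundF v x)
      integrable_phi
      (Eventually.of_forall fun x => by
        have h1 : Tendsto (fun v : ℝ => x + v) atBot atBot :=
          tendsto_atBot_add_const_left _ _ tendsto_id
        have h2 := tendsto_stdGaussianCDF_atBot.comp h1
        have h3 : Tendsto (fun v : ℝ => stdGaussianCDF (x+v)^2) atBot (nhds 0) := by
          have := h2.mul h2
          simpa [sq] using this
        simpa using h3.mul_const (phi x))
    simpa using this
  have hGb : Tendsto G atBot (nhds 0) := by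
    have hdiv : Tendsto (fun v : ℝ => v / Real.sqrt 2) atBot atBot :=
      tendsto_id.atBot_div_const hr2
    have h1 : Tendsto (fun v : ℝ => stdGaussianCDF (v/Real.sqrt 2)) atBot (nhds 0) :=
      tendsto_stdGaussianCDF_atBot.comp hdiv
    have h2 : Tendsto (fun v : ℝ => owenT (v/Real.sqrt 2) (1/Real.sqrt 3)) atBot (nhds 0) := by
      have hg : Tendsto (fun v : ℝ =>
          (1/(2*Real.pi)) * (Real.exp (-(v/Real.sqrt 2)^2/2) * (1/Real.sqrt 3)))
          atBot (nhds 0) := by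
        have hexp := tendsto_exp_neg_sq.comp hdiv
        have := (hexp.mul_const (1/Real.sqrt 3)).const_mul (1/(2*Real.pi))
        simpa [Function.comp] using this
      exact squeeze_zero_norm
        (fun v => (Real.norm_eq_abs _).trans_le (abs_owenT_le hb3 _)) hg
    have hfin := h1.sub (h2.const_mul 2)
    have h0 : (0:ℝ) - 2*0 = 0 := by ring
    rw [h0] at hfin
    exact hfin
  have := eq_of_hasDerivAt_of_tendsto_atBot hderivF hderivG hFb hGb
  exact congrFun this a

lemma integral_gaussianReal_eq (g : ℝ → ℝ) :
    ∫ x, g x ∂(gaussianReal 0 1) = ∫ x, g x * phi x := by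
  rw [gaussianReal_of_var_ne_zero 0 one_ne_zero, gaussianPDF_def]
  have hcoe : (fun x => ENNReal.ofReal (gaussianPDFReal 0 1 x))
      = fun x => ((gaussianPDFReal 0 1 x).toNNReal : ENNReal) := rfl
  rw [hcoe, integral_withDensity_eq_integral_smul
    (measurable_gaussianPDFReal 0 1).real_toNNReal g]
  congr 1
  funext x
  rw [NNReal.smul_def, Real.coe_toNNReal _ (gaussianPDFReal_nonneg 0 1 x), ← phi_eq_pdf,
    smul_eq_mul]
  ring

/-- For `Z ~ N(0,1)` and any `a ∈ ℝ`,
`Var(Φ(Z + a)) = Φ(a/√2) - Φ(a/√2)² - 2T(a/√2, 1/√3)`. -/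
theorem variance_stdGaussianCDF_add (a : ℝ) :
    variance (fun x => stdGaussianCDF (x + a)) (gaussianReal 0 1) =
      stdGaussianCDF (a / Real.sqrt 2) - stdGaussianCDF (a / Real.sqrt 2) ^ 2 -
        2 * owenT (a / Real.sqrt 2) (1 / Real.sqrt 3) := by
  have hmeas : AEStronglyMeasurable (fun x => stdGaussianCDF (x + a)) (gaussianReal 0 1) :=
    (measurable_stdGaussianCDF.comp (by fun_prop : Measurable fun x : ℝ => x + a)).aestronglyMeasurable
  have hmem : MemLp (fun x => stdGaussianCDF (x + a)) 2 (gaussianReal 0 1) := by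
    refine memLp_of_bounded (a := (0:ℝ)) (b := (1:ℝ)) (ae_of_all _ fun x => ?_) hmeas 2
    exact ⟨stdGaussianCDF_nonneg _, stdGaussianCDF_le_one _⟩
  rw [variance_eq_sub hmem]
  have h1 : (gaussianReal 0 1)[(fun x => stdGaussianCDF (x + a)) ^ 2]
      = stdGaussianCDF (a/Real.sqrt 2) - 2 * owenT (a/Real.sqrt 2) (1/Real.sqrt 3) := by
    have : ((fun x => stdGaussianCDF (x + a)) ^ 2) = fun x => stdGaussianCDF (x + a)^2 := by
      funext x; simp [Pi.pow_apply]
    rw [this, integral_gaussianReal_eq, integral_cdf_sq_mul_phi a]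
  have h2 : (gaussianReal 0 1)[fun x => stdGaussianCDF (x + a)]
      = stdGaussianCDF (a/Real.sqrt 2) := by
    rw [integral_gaussianReal_eq]
    have hpt : ∀ x : ℝ, stdGaussianCDF (x + a) * phi x
        = stdGaussianCDF (1*x + a) * phi x := by intro x; rw [one_mul]
    rw [funext hpt, integral_cdf_mul_phi 1 a]
    norm_num
  rw [h1, h2]
  ring
end
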